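/- arXiv:2002.03208 — 6 statements merged into one kernel-verified Lean document; each statement's English description precedes it below -/
import Mathlib

section
/- Let G = ℤ² ⋊ ℤ be the semidirect product in which the generator t of ℤ acts on ℤ² by negation. Then for every integer pair (a,b), the commutator ⁅t,(a,b)⁆ equals (-2a,-2b) (viewed inside the ℤ² factor), and for every k ≥ 1 the k-th term of the lower central series of G (with γ₀ G = G) is exactly the subgroup 2ᵏℤ × 2ᵏℤ of the ℤ² factor. -/
open SemidirectProduct
open scoped commutatorElement

/-- The abelian group `ℤ²`, written multiplicatively. -/
abbrev Z2 : Type := Multiplicative (ℤ × ℤ)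

/-- The action of `ℤ` on `ℤ²` in which the generator acts by negation. -/
noncomputable def negAct : Multiplicative ℤ →* MulAut Z2 :=
  zpowersHom (MulAut Z2) (MulEquiv.inv Z2)

/-- The semidirect product `ℤ² ⋊ ℤ`, where the generator `t` of `ℤ` acts on `ℤ²`
by negation. -/
abbrev TB : Type := SemidirectProduct Z2 (Multiplicative ℤ) negAct

/-- The generator `t` of the `ℤ` factor. -/
noncomputable def tgen : TB := inr (Multiplicative.ofAdd (1 : ℤ))

open Multiplicative

/-- The sign `(-1)^m`. -/
def eps (m : ℤ) : ℤ := if Even m then 1 else -1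

lemma eps_add_one (m : ℤ) : eps (m + 1) = -eps m := by
  unfold eps
  rcases Int.even_or_odd m with h | h
  · simp [h, Int.not_even_iff_odd, Even.add_one h]
  · simp [Int.not_even_iff_odd.2 h, h.add_one]

lemma eps_sub_one (m : ℤ) : eps (m - 1) = -eps m := by
  have := eps_add_one (m - 1); rw [sub_add_cancel] at this; omega

lemma negAct_apply (m : Multiplicative ℤ) (x : Z2) : negAct m x = x ^ eps m.toAdd := by
  show ((MulEquiv.inv Z2) ^ (toAdd m)) x = _
  induction (toAdd m) using Int.induction_on with
  | zero => simp [eps]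
  | succ n ih =>
      rw [zpow_add_one, MulAut.mul_apply, MulEquiv.inv_apply, map_inv, ih, eps_add_one,
        zpow_neg, ← inv_zpow]
  | pred n ih =>
      rw [zpow_sub_one, MulAut.mul_apply, eps_sub_one]
      have h1 : (MulEquiv.inv Z2)⁻¹ x = x⁻¹ := rfl
      rw [h1, map_inv, ih, zpow_neg, ← inv_zpow]

@[simp] lemma eps_add (m n : ℤ) : eps (m + n) = eps m * eps n := by
  unfold eps
  rcases em (Even m) with h | h <;> rcases em (Even n) with h' | h' <;>
    simp [Int.even_add, h, h']

@[simp] lemma eps_neg (m : ℤ) : eps (-m) = eps m := by unfold eps; simp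

@[simp] lemma eps_zero : eps 0 = 1 := by simp [eps]

lemma eps_mul_self (m : ℤ) : eps m * eps m = 1 := by
  unfold eps; rcases em (Even m) with h | h <;> simp [h]

lemma eps_cases (c : ℤ) : eps c = 1 ∨ eps c = -1 := by unfold eps; split <;> simp

lemma eps_one : eps 1 = -1 := by norm_num [eps, Int.even_iff]

/-- The commutator formula in `TB`. -/
lemma comm_eq (u v : ℤ × ℤ) (m n : ℤ) :
    ⁅(⟨ofAdd u, ofAdd m⟩ : TB), (⟨ofAdd v, ofAdd n⟩ : TB)⁆ =
      ⟨ofAdd ((1 - eps n) • u + (eps m - 1) • v), 1⟩ := by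
  ext : 1
  · show (_ : Z2) = _
    simp only [commutatorElement_def, mul_left, mul_right, inv_left, inv_right, negAct_apply,
      toAdd_mul, toAdd_inv, toAdd_ofAdd, eps_add, eps_neg, ← ofAdd_zsmul, ← ofAdd_add,
      smul_add, smul_smul, inv_zpow, ← zpow_neg, ← neg_smul, ← ofAdd_neg]
    congr 1
    obtain ⟨u1, u2⟩ := u; obtain ⟨v1, v2⟩ := v
    have hm := eps_mul_self m; have hn := eps_mul_self n
    simp only [Prod.neg_mk, Prod.smul_mk, smul_eq_mul, Prod.mk_add_mk, Prod.ext_iff, mul_neg]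
    constructor
    · linear_combination (-eps n * u1 - eps n * eps n * v1) * hm - v1 * hn
    · linear_combination (-eps n * u2 - eps n * eps n * v2) * hm - v2 * hn
  · show (_ : Multiplicative ℤ) = _
    simp only [commutatorElement_def, mul_left, mul_right, inv_left, inv_right]
    simp [← ofAdd_add, ← ofAdd_neg]

/-- Membership in the image of `2ᵏℤ × 2ᵏℤ`. -/
lemma mem_S_iff (k : ℕ) (g : TB) :
    g ∈ Subgroup.map (inl : Z2 →* TB)
      (AddSubgroup.toSubgroup ((AddSubgroup.zmultiples ((2:ℤ)^k)).prod
        (AddSubgroup.zmultiples ((2:ℤ)^k)))) ↔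
    (((2:ℤ)^k ∣ (toAdd g.left).1 ∧ (2:ℤ)^k ∣ (toAdd g.left).2) ∧ g.right = 1) := by
  have hmem : ∀ x : Z2, x ∈ AddSubgroup.toSubgroup ((AddSubgroup.zmultiples ((2:ℤ)^k)).prod
        (AddSubgroup.zmultiples ((2:ℤ)^k))) ↔
        ((2:ℤ)^k ∣ (toAdd x).1 ∧ (2:ℤ)^k ∣ (toAdd x).2) := by
    intro x
    show toAdd x ∈ (AddSubgroup.zmultiples ((2:ℤ)^k)).prod (AddSubgroup.zmultiples ((2:ℤ)^k)) ↔ _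
    rw [AddSubgroup.mem_prod, Int.mem_zmultiples_iff, Int.mem_zmultiples_iff]
  constructor
  · rintro ⟨y, hy, rfl⟩
    simp only [left_inl, right_inl, and_true]
    exact (hmem y).1 hy
  · rintro ⟨h1, h2⟩
    exact ⟨g.left, (hmem g.left).2 h1, by ext <;> simp [h2]⟩

lemma tgen_eq : tgen = (⟨ofAdd ((0:ℤ), (0:ℤ)), ofAdd (1:ℤ)⟩ : TB) := by
  ext <;> simp [tgen]

/-- In `G = ℤ² ⋊ ℤ` (generator `t` of `ℤ` acting by negation), the commutator
`⁅t,(a,b)⁆` equals `(-2a,-2b)`, and for every `k ≥ 1` the `k`-th lower central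
series term (with `γ₀ G = G`) is exactly the subgroup `2ᵏℤ × 2ᵏℤ` of the `ℤ²` factor. -/
theorem commutator_and_lowerCentralSeries_of_torusBundleGroup :
    (∀ a b : ℤ,
      ⁅tgen, (inl (Multiplicative.ofAdd (a, b)) : TB)⁆ =
        inl (Multiplicative.ofAdd (-2 * a, -2 * b))) ∧
    (∀ k : ℕ, 1 ≤ k →
      (⊤ : Subgroup TB).lowerCentralSeries k =
        Subgroup.map (inl : Z2 →* TB)
          (AddSubgroup.toSubgroup
            ((AddSubgroup.zmultiples ((2 : ℤ) ^ k)).prod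
              (AddSubgroup.zmultiples ((2 : ℤ) ^ k))))) := by
  constructor
  · intro a b
    have hi : (inl (ofAdd (a, b)) : TB) = ⟨ofAdd (a, b), ofAdd (0:ℤ)⟩ := by
      ext <;> simp
    have hj : (inl (ofAdd (-2 * a, -2 * b)) : TB) = ⟨ofAdd (-2 * a, -2 * b), 1⟩ := by
      ext <;> simp
    rw [tgen_eq, hi, hj, comm_eq]
    congr 2
    simp [eps_one, Prod.smul_mk, smul_eq_mul, Prod.ext_iff]
  · intro k hk
    induction k, hk using Nat.le_induction with
    | base =>
      rw [Subgroup.top_lowerCentralSeries_one, commutator_def]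
      apply le_antisymm
      · rw [Subgroup.commutator_le]
        intro g _ h _
        obtain ⟨gu, gm⟩ := g; obtain ⟨hu, hm⟩ := h
        have hc := comm_eq gu.toAdd hu.toAdd gm.toAdd hm.toAdd
        simp only [ofAdd_toAdd] at hc
        rw [hc, mem_S_iff]
        refine ⟨⟨?_, ?_⟩, rfl⟩ <;>
        · simp only [toAdd_ofAdd, pow_one, Prod.fst_add, Prod.snd_add,
            Prod.smul_fst, Prod.smul_snd, smul_eq_mul]
          rcases eps_cases gm.toAdd with e | e <;> rcases eps_cases hm.toAdd with e' | e' <;>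
            rw [e, e'] <;> omega
      · intro x hx
        rw [mem_S_iff] at hx
        obtain ⟨⟨⟨c1, hc1⟩, ⟨c2, hc2⟩⟩, hr⟩ := hx
        rw [pow_one] at hc1 hc2
        have hx2 : x = ⁅(⟨ofAdd (c1, c2), ofAdd (0:ℤ)⟩ : TB), (⟨ofAdd ((0:ℤ),(0:ℤ)), ofAdd (1:ℤ)⟩ : TB)⁆ := by
          rw [comm_eq]
          ext : 1
          · show x.left = _
            have hl : toAdd x.left = ((1 - eps 1) • (c1, c2) + (eps 0 - 1) • ((0:ℤ),(0:ℤ))) := by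
              simp [eps_one, Prod.smul_mk, smul_eq_mul, Prod.ext_iff]
              constructor <;> omega
            rw [← hl, ofAdd_toAdd]
          · exact hr
        rw [hx2]
        exact Subgroup.commutator_mem_commutator (Subgroup.mem_top _) (Subgroup.mem_top _)
    | succ k hk ih =>
      have hstep : (⊤ : Subgroup TB).lowerCentralSeries (k+1) = ⁅(⊤ : Subgroup TB).lowerCentralSeries k, (⊤ : Subgroup TB)⁆ := rfl
      rw [hstep, ih]
      apply le_antisymm
      · rw [Subgroup.commutator_le]
        intro g hg h _
        obtain ⟨gu, gm⟩ := g; obtain ⟨hu, hm⟩ := h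
        rw [mem_S_iff] at hg
        obtain ⟨⟨⟨c1, hc1⟩, ⟨c2, hc2⟩⟩, hr⟩ := hg
        have hgm : gm.toAdd = 0 := by
          have : gm = 1 := hr
          rw [this]; rfl
        have hc := comm_eq gu.toAdd hu.toAdd gm.toAdd hm.toAdd
        simp only [ofAdd_toAdd] at hc
        rw [hc, mem_S_iff]
        refine ⟨⟨?_, ?_⟩, rfl⟩
        · simp only [toAdd_ofAdd, Prod.fst_add, Prod.smul_fst, smul_eq_mul, hgm, eps_zero,
            sub_self, zero_mul, add_zero]
          rcases eps_cases hm.toAdd with e | e <;> rw [e]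
          · simp
          · rw [hc1]
            exact ⟨c1, by ring⟩
        · simp only [toAdd_ofAdd, Prod.snd_add, Prod.smul_snd, smul_eq_mul, hgm, eps_zero,
            sub_self, zero_mul, add_zero]
          rcases eps_cases hm.toAdd with e | e <;> rw [e]
          · simp
          · rw [hc2]
            exact ⟨c2, by ring⟩
      · intro x hx
        rw [mem_S_iff] at hx
        obtain ⟨⟨⟨c1, hc1⟩, ⟨c2, hc2⟩⟩, hr⟩ := hx
        have hx2 : x = ⁅(⟨ofAdd ((2:ℤ)^k * c1, (2:ℤ)^k * c2), ofAdd (0:ℤ)⟩ : TB),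
            (⟨ofAdd ((0:ℤ),(0:ℤ)), ofAdd (1:ℤ)⟩ : TB)⁆ := by
          rw [comm_eq]
          ext : 1
          · show x.left = _
            have hl : toAdd x.left =
                ((1 - eps 1) • ((2:ℤ)^k * c1, (2:ℤ)^k * c2) + (eps 0 - 1) • ((0:ℤ),(0:ℤ))) := by
              simp only [eps_one, eps_zero, sub_self, zero_smul, add_zero, Prod.smul_mk,
                smul_eq_mul, Prod.ext_iff]
              rw [pow_succ] at hc1 hc2
              constructor
              · rw [hc1]; ring
              · rw [hc2]; ring
            rw [← hl, ofAdd_toAdd]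
          · exact hr
        rw [hx2]
        refine Subgroup.commutator_mem_commutator ?_ (Subgroup.mem_top _)
        rw [mem_S_iff]
        exact ⟨⟨⟨c1, rfl⟩, ⟨c2, rfl⟩⟩, rfl⟩
end

section
/- The semidirect product ℤ² ⋊ ℤ, where the generator of ℤ acts on ℤ² by negation, is residually nilpotent: the intersection of all terms of its lower central series is the trivial subgroup. -/
open SemidirectProduct

open scoped commutatorElement

lemma negAct_conj (s t : Multiplicative ℤ) (a : Z2) :
    negAct s (negAct t ((negAct s)⁻¹ a)) = negAct t a := by
  rw [← MulAut.mul_apply, ← MulAut.mul_apply, ← map_inv, ← map_mul, ← map_mul,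
    mul_comm s t, mul_assoc, mul_inv_cancel, mul_one]

lemma negAct_dichotomy (s : Multiplicative ℤ) (a : Z2) :
    negAct s a = a ∨ negAct s a = a⁻¹ := by
  have h2 : (MulEquiv.inv Z2) * (MulEquiv.inv Z2) = 1 := by
    ext x <;> simp
  have key : ∀ m : ℤ, (MulEquiv.inv Z2) ^ m = 1 ∨ (MulEquiv.inv Z2) ^ m = MulEquiv.inv Z2 := by
    intro m
    rcases Int.even_or_odd m with ⟨q, hq⟩ | ⟨q, hq⟩
    · left
      rw [hq, ← two_mul, zpow_mul]
      norm_cast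
      rw [pow_two, h2, one_zpow]
    · right
      rw [hq, zpow_add, zpow_mul]
      norm_cast
      rw [pow_two, h2, one_zpow, one_mul, pow_one]
  have : negAct s = (MulEquiv.inv Z2) ^ (Multiplicative.toAdd s) := by
    simp [negAct]
  rcases key (Multiplicative.toAdd s) with h | h
  · left; rw [this, h]; rfl
  · right; rw [this, h]; rfl

lemma comm_left (g h : TB) :
    (⁅g,h⁆).left = g.left * negAct g.right h.left * (negAct h.right g.left)⁻¹ * h.left⁻¹ := by
  simp [commutatorElement_def, negAct_conj]
  exact negAct_conj _ _ _

lemma comm_right (g h : TB) : (⁅g,h⁆).right = 1 := by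
  simp [commutatorElement_def]

/-- The subgroup of `TB` of elements `(a, 1)` with both coordinates of `a`
divisible by `2^k`. -/
noncomputable def Hgrp (k : ℕ) : Subgroup TB where
  carrier := {g | g.right = 1 ∧ (2^k : ℤ) ∣ (Multiplicative.toAdd g.left).1 ∧
      (2^k : ℤ) ∣ (Multiplicative.toAdd g.left).2}
  one_mem' := by simp
  mul_mem' := by
    rintro g h ⟨hg1, hg2, hg3⟩ ⟨hh1, hh2, hh3⟩
    refine ⟨by simp [mul_right, hg1, hh1], ?_, ?_⟩ <;>
      simp [mul_left, hg1, map_one] <;> [exact dvd_add hg2 hh2; exact dvd_add hg3 hh3]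
  inv_mem' := by
    rintro g ⟨hg1, hg2, hg3⟩
    refine ⟨by simp [inv_right, hg1], ?_, ?_⟩ <;>
      simp [inv_left, hg1, map_one] <;> assumption

lemma comm_mem (k : ℕ) (g h : TB) (hg : g ∈ Hgrp k) : ⁅g,h⁆ ∈ Hgrp (k+1) := by
  obtain ⟨hg1, hg2, hg3⟩ := hg
  refine ⟨comm_right g h, ?_⟩
  have hl : (⁅g,h⁆).left = g.left * (negAct h.right g.left)⁻¹ := by
    rw [comm_left, hg1, map_one]
    simp [mul_comm, mul_assoc, mul_left_comm]
  rcases negAct_dichotomy h.right g.left with hd | hd <;> rw [hd] at hl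
  · simp only [hl, mul_inv_cancel]
    simp
  · simp only [hl, inv_inv]
    constructor <;> simp only [toAdd_mul, Prod.fst_add, Prod.snd_add,
      pow_succ]
    · obtain ⟨c, hc⟩ := hg2; exact ⟨c, by rw [hc]; ring⟩
    · obtain ⟨c, hc⟩ := hg3; exact ⟨c, by rw [hc]; ring⟩

lemma comm_mem_one (g h : TB) : ⁅g,h⁆ ∈ Hgrp 1 := by
  refine ⟨comm_right g h, ?_⟩
  rw [comm_left]
  rcases negAct_dichotomy g.right h.left with hd | hd <;>
    rcases negAct_dichotomy h.right g.left with hd' | hd' <;>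
    rw [hd, hd'] <;>
    constructor <;>
    simp only [toAdd_mul, toAdd_inv, Prod.fst_add, Prod.snd_add,
      Prod.fst_neg, Prod.snd_neg, pow_one] <;>
    omega

lemma lcs_le (k : ℕ) : (⊤ : Subgroup TB).lowerCentralSeries (k+1) ≤ Hgrp (k+1) := by
  induction k with
  | zero =>
    rw [lowerCentralSeries_succ]
    refine (Subgroup.closure_le _).2 ?_
    rintro x ⟨p, -, q, -, rfl⟩
    exact comm_mem_one p q
  | succ n ih =>
    rw [lowerCentralSeries_succ]
    refine (Subgroup.closure_le _).2 ?_
    rintro x ⟨p, hp, q, -, rfl⟩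
    exact comm_mem (n+1) p q (ih hp)

lemma int_zero_of_pows (x : ℤ) (h : ∀ k : ℕ, (2:ℤ)^k ∣ x) : x = 0 := by
  by_contra hx
  have hle := Int.le_of_dvd (abs_pos.mpr hx) ((dvd_abs _ _).mpr (h x.natAbs))
  have h2 : (x.natAbs : ℤ) < 2 ^ x.natAbs := by exact_mod_cast (Nat.lt_two_pow_self (n := x.natAbs))
  rw [Int.abs_eq_natAbs] at hle
  omega

/-- The group `ℤ² ⋊ ℤ` (generator of `ℤ` acting on `ℤ²` by negation) is residually
nilpotent: the intersection of its lower central series is trivial. -/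
theorem torusBundleGroup_residuallyNilpotent :
    (⨅ k : ℕ, (⊤ : Subgroup TB).lowerCentralSeries k) = ⊥ := by
  rw [eq_bot_iff]
  intro g hg
  simp only [Subgroup.mem_iInf] at hg
  have hmem : ∀ k : ℕ, g ∈ Hgrp (k+1) := fun k => lcs_le k (hg (k+1))
  have hr : g.right = 1 := (hmem 0).1
  have h1 : (Multiplicative.toAdd g.left).1 = 0 := by
    apply int_zero_of_pows
    intro k
    exact dvd_trans (pow_dvd_pow 2 (Nat.le_succ k)) (hmem k).2.1
  have h2 : (Multiplicative.toAdd g.left).2 = 0 := by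
    apply int_zero_of_pows
    intro k
    exact dvd_trans (pow_dvd_pow 2 (Nat.le_succ k)) (hmem k).2.2
  have hl : g.left = 1 := by
    have : Multiplicative.toAdd g.left = 0 := Prod.ext h1 h2
    simpa using this
  rw [Subgroup.mem_bot]
  ext <;> simp [hl, hr]
end

section
/- Let G be a group containing elements t and u with t·u·t⁻¹ = u⁻¹. Then for every natural number k, the element u^(2^k) lies in the k-th term γ_k G of the lower central series of G (where γ₀ G = G). -/
/-- If `t u t⁻¹ = u⁻¹` in a group `G`, then `u ^ (2 ^ k)` lies in the `k`-th term of
the lower central series of `G` (with `γ₀ G = G`). -/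
theorem pow_two_pow_mem_lowerCentralSeries {G : Type*} [Group G] (t u : G)
    (h : t * u * t⁻¹ = u⁻¹) (k : ℕ) :
    u ^ (2 ^ k) ∈ (⊤ : Subgroup G).lowerCentralSeries k := by
  have hconj : ∀ n : ℕ, t * u ^ n * t⁻¹ = (u ^ n)⁻¹ := by
    intro n
    rw [← conj_pow, h, inv_pow]
  induction k with
  | zero => exact Subgroup.mem_top _
  | succ k ih =>
    open scoped commutatorElement in
    have key : u ^ (2 ^ (k + 1)) = ⁅u ^ (2 ^ k), t⁆ := by
      have := hconj (2 ^ k)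
      rw [commutatorElement_def]
      have ht : t * (u ^ (2 ^ k))⁻¹ * t⁻¹ = u ^ (2 ^ k) := by
        rw [← conj_inv, this, inv_inv]
      calc u ^ (2 ^ (k + 1)) = u ^ (2 ^ k) * u ^ (2 ^ k) := by
              rw [← pow_add]; ring_nf
        _ = u ^ (2 ^ k) * (t * (u ^ (2 ^ k))⁻¹ * t⁻¹) := by rw [ht]
        _ = u ^ 2 ^ k * t * (u ^ 2 ^ k)⁻¹ * t⁻¹ := by group
    rw [key]
    exact Subgroup.commutator_mem_commutator ih (Subgroup.mem_top _)
end

section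
/- If f : G → H is a group homomorphism that induces a surjection on abelianizations, then for every natural number k the composition G → H → H/γ_k H is surjective; equivalently, the range of f together with γ_k H generates H. -/
open scoped commutatorElement

private lemma commutatorElement_mul_central {Q : Type*} [Group Q] {z : Q}
    (hz : ∀ g : Q, z * g = g * z) (a b : Q) : ⁅a * z, b⁆ = ⁅a, b⁆ := by
  simp only [commutatorElement_def, mul_inv_rev]
  calc a * z * b * (z⁻¹ * a⁻¹) * b⁻¹
      = a * (z * b) * z⁻¹ * a⁻¹ * b⁻¹ := by group
    _ = a * (b * z) * z⁻¹ * a⁻¹ * b⁻¹ := by rw [hz b]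
    _ = a * b * a⁻¹ * b⁻¹ := by group

private lemma commutator_le_of_central_sup {Q : Type*} [Group Q] (K Z : Subgroup Q)
    (hZ : Z ≤ Subgroup.center Q) (h : K ⊔ Z = ⊤) :
    ⁅(⊤ : Subgroup Q), (⊤ : Subgroup Q)⁆ ≤ K := by
  haveI : Z.Normal := ⟨fun n hn g => by
    have := (Subgroup.mem_center_iff.mp (hZ hn)) g
    rw [this, mul_assoc, mul_inv_cancel, mul_one]; exact hn⟩
  rw [Subgroup.commutator_le]
  intro a _ b _
  have ha : a ∈ (K ⊔ Z : Subgroup Q) := h ▸ Subgroup.mem_top a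
  have hb : b ∈ (K ⊔ Z : Subgroup Q) := h ▸ Subgroup.mem_top b
  rw [← SetLike.mem_coe, Subgroup.mul_normal] at ha hb
  obtain ⟨k₁, hk₁, z₁, hz₁, rfl⟩ := ha
  obtain ⟨k₂, hk₂, z₂, hz₂, rfl⟩ := hb
  have c₁ : ∀ g : Q, z₁ * g = g * z₁ := fun g =>
    ((Subgroup.mem_center_iff.mp (hZ hz₁)) g).symm
  have c₂ : ∀ g : Q, z₂ * g = g * z₂ := fun g =>
    ((Subgroup.mem_center_iff.mp (hZ hz₂)) g).symm
  have : ⁅k₁ * z₁, k₂ * z₂⁆ = ⁅k₁, k₂⁆ := by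
    rw [commutatorElement_mul_central c₁, ← commutatorElement_inv,
      commutatorElement_mul_central c₂, commutatorElement_inv]
  rw [this, commutatorElement_def]
  exact Subgroup.mul_mem _ (Subgroup.mul_mem _ (Subgroup.mul_mem _ hk₁ hk₂)
    (Subgroup.inv_mem _ hk₁)) (Subgroup.inv_mem _ hk₂)

private lemma range_sup_commutator_eq_top {G H : Type*} [Group G] [Group H] (f : G →* H)
    (hf : Function.Surjective (Abelianization.map f)) :
    f.range ⊔ commutator H = ⊤ := by
  rw [Subgroup.eq_top_iff']
  intro h
  obtain ⟨a, ha⟩ := hf (Abelianization.of h)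
  obtain ⟨g, rfl⟩ : ∃ g : G, Abelianization.of g = a := QuotientGroup.mk_surjective a
  rw [Abelianization.map_of] at ha
  have hc : (f g)⁻¹ * h ∈ commutator H := by
    have : (Abelianization.of ((f g)⁻¹ * h) : Abelianization H) = 1 := by
      rw [map_mul, map_inv, ha, inv_mul_cancel]
    exact (QuotientGroup.eq_one_iff _).mp this
  have : h = f g * ((f g)⁻¹ * h) := by group
  rw [this]
  exact Subgroup.mul_mem _ (Subgroup.mem_sup_left ⟨g, rfl⟩) (Subgroup.mem_sup_right hc)

private lemma range_sup_lcs_eq_top {G H : Type*} [Group G] [Group H] (f : G →* H)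
    (hf : Function.Surjective (Abelianization.map f)) (k : ℕ) :
    f.range ⊔ (⊤ : Subgroup H).lowerCentralSeries k = ⊤ := by
  induction k with
  | zero => simp [Subgroup.lowerCentralSeries]
  | succ k ih =>
    set N := (⊤ : Subgroup H).lowerCentralSeries (k + 1) with hN
    let π : H →* H ⧸ N := QuotientGroup.mk' N
    have hπ : Function.Surjective π := QuotientGroup.mk'_surjective N
    have hker : π.ker = N := QuotientGroup.ker_mk' N
    -- the image of γ_k H in the quotient is central
    have hcent : ((⊤ : Subgroup H).lowerCentralSeries k).map π ≤ Subgroup.center (H ⧸ N) := by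
      rintro q ⟨x, hx, rfl⟩
      rw [Subgroup.mem_center_iff]
      intro q'
      obtain ⟨y, rfl⟩ := hπ q'
      have : ⁅x, y⁆ ∈ N := by
        rw [hN, Subgroup.lowerCentralSeries_succ]
        exact Subgroup.commutator_mem_commutator hx (Subgroup.mem_top y)
      have h1 : π ⁅x, y⁆ = 1 := by
        rw [← MonoidHom.mem_ker, hker]; exact this
      rw [map_commutatorElement] at h1
      have := commutatorElement_eq_one_iff_mul_comm.mp h1
      -- this : π x * π y = π y * π x
      rw [this]
    -- image of f.range and of γ_k generate the quotient
    have hsup : (f.range).map π ⊔ ((⊤ : Subgroup H).lowerCentralSeries k).map π = ⊤ := by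
      rw [← Subgroup.map_sup, ih, ← MonoidHom.range_eq_map,
        MonoidHom.range_eq_top]
      exact hπ
    -- hence the commutator of the quotient lies in the image of f.range
    have hcomm : ⁅(⊤ : Subgroup (H ⧸ N)), (⊤ : Subgroup (H ⧸ N))⁆ ≤ (f.range).map π :=
      commutator_le_of_central_sup _ _ hcent hsup
    -- abelianization surjectivity pushed to the quotient
    have habel : (f.range).map π ⊔ commutator (H ⧸ N) = ⊤ := by
      have := congrArg (Subgroup.map π) (range_sup_commutator_eq_top f hf)
      rwa [Subgroup.map_sup, commutator_def, Subgroup.map_commutator,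
        Subgroup.map_top_of_surjective π hπ, ← commutator_def] at this
    have htop : (f.range).map π = ⊤ := by
      rw [← habel, left_eq_sup]
      exact hcomm
    have := congrArg (Subgroup.comap π) htop
    rwa [Subgroup.comap_map_eq, hker, Subgroup.comap_top] at this

/-- If `f : G → H` induces a surjection on abelianizations, then for every `k` the
composition `G → H → H/γ_k H` is surjective; equivalently, the range of `f` together
with `γ_k H` generates `H`. -/
theorem surjective_onto_nilpotent_quotients_of_abelianization_surjective
    {G H : Type*} [Group G] [Group H] (f : G →* H)
    (hf : Function.Surjective (Abelianization.map f)) (k : ℕ) :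
    Function.Surjective
      (fun g : G => ((f g : H) : H ⧸ (⊤ : Subgroup H).lowerCentralSeries k)) ∧
    f.range ⊔ (⊤ : Subgroup H).lowerCentralSeries k = ⊤ := by
  have key := range_sup_lcs_eq_top f hf k
  refine ⟨?_, key⟩
  intro q
  obtain ⟨h, rfl⟩ := QuotientGroup.mk_surjective q
  have hh : h ∈ (f.range ⊔ (⊤ : Subgroup H).lowerCentralSeries k : Subgroup H) := by rw [key]; exact Subgroup.mem_top h
  rw [← SetLike.mem_coe, Subgroup.mul_normal] at hh
  obtain ⟨x, ⟨g, rfl⟩, n, hn, rfl⟩ := hh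
  refine ⟨g, ?_⟩
  show (QuotientGroup.mk (f g) : H ⧸ (⊤ : Subgroup H).lowerCentralSeries k) = QuotientGroup.mk (f g * n)
  exact (QuotientGroup.eq).mpr (by simpa using hn)
end

section
/- Let p be a Laurent polynomial with integer coefficients that is symmetric under t ↦ t⁻¹, i.e., p(t) = p(t⁻¹). Then 4 divides p(−1) − p(1). In particular, if p(1) = ±1 then p(−1) ≡ ±1 (mod 4), and p(−1) is odd. -/
/-- Evaluation of an integral Laurent polynomial at a unit `u ∈ {±1}` of `ℤ`. -/
noncomputable def laurentEval (u : ℤˣ) : LaurentPolynomial ℤ →ₐ[ℤ] ℤ :=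
  AddMonoidAlgebra.lift ℤ ℤ ℤ ((Units.coeHom ℤ).comp (zpowersHom ℤˣ u))

lemma laurentEval_apply (u : ℤˣ) (p : LaurentPolynomial ℤ) :
    laurentEval u p = ∑ n ∈ p.coeff.support, p.coeff n * ((u ^ n : ℤˣ) : ℤ) := by
  rw [laurentEval, AddMonoidAlgebra.lift_apply]
  simp [Finsupp.sum, zpowersHom_apply, smul_eq_mul]

lemma neg_one_units_zpow_neg (n : ℤ) : ((-1 : ℤˣ) ^ (-n)) = (-1 : ℤˣ) ^ n := by
  rw [zpow_neg]
  rcases Int.units_eq_one_or ((-1 : ℤˣ) ^ n) with h | h <;> rw [h] <;> decide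

/-- If `p ∈ ℤ[t,t⁻¹]` is symmetric under `t ↦ t⁻¹`, then `4 ∣ p(-1) - p(1)`; in
particular, if `p(1) = ±1`, then `p(-1) ≡ p(1) (mod 4)` and `p(-1)` is odd. -/
theorem symmetric_laurent_eval_neg_one (p : LaurentPolynomial ℤ)
    (hsym : LaurentPolynomial.invert p = p) :
    (4 : ℤ) ∣ laurentEval (-1) p - laurentEval 1 p ∧
    ((laurentEval 1 p = 1 ∨ laurentEval 1 p = -1) →
      laurentEval (-1) p ≡ laurentEval 1 p [ZMOD 4] ∧ Odd (laurentEval (-1) p)) := by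
  have hp : ∀ n : ℤ, p.coeff (-n) = p.coeff n := by
    intro n
    rw [← LaurentPolynomial.invert_apply, hsym]
  have key : (4 : ℤ) ∣ laurentEval (-1) p - laurentEval 1 p := by
    rw [show (4 : ℤ) = ((4 : ℕ) : ℤ) by norm_num,
      ← ZMod.intCast_zmod_eq_zero_iff_dvd]
    rw [laurentEval_apply, laurentEval_apply, ← Finset.sum_sub_distrib]
    push_cast
    refine Finset.sum_involution (fun n _ => -n) ?_ ?_ ?_ ?_
    · intro n hn
      simp only [hp, neg_one_units_zpow_neg, one_zpow]
      rcases Int.units_eq_one_or ((-1 : ℤˣ) ^ n) with h | h <;> rw [h]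
      · push_cast; ring
      · have hv : ((-1 : ℤˣ) : ℤ) = -1 := rfl
        rw [hv]
        push_cast
        have h4 : (4 : ZMod 4) = 0 := by decide
        linear_combination (-(p.coeff n : ZMod 4)) * h4
    · intro n hn hf h
      have h' : -n = n := h
      have hn0 : n = 0 := by omega
      subst hn0
      simp at hf
    · intro n hn
      simpa only [Finsupp.mem_support_iff, hp] using hn
    · intro n hn
      simp
  refine ⟨key, fun h1 => ?_⟩
  obtain ⟨k, hk⟩ := key
  constructor
  · exact Int.modEq_iff_dvd.mpr ⟨-k, by omega⟩
  · rcases h1 with h | h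
    · exact ⟨2 * k, by omega⟩
    · exact ⟨2 * k - 1, by omega⟩
end

section
/- Let d be an odd integer and let M = ℤ² be the module over the Laurent polynomial ring ℤ[t, t⁻¹] on which t acts by the matrix h = [[-1, d], [0, -1]]. Let I be the augmentation ideal (the ideal generated by t − 1). Then for every k, I^(2k)·M ⊆ 4^k·M; consequently ⋂_k I^k·M = 0. -/
/-- The monodromy matrix `h = [[-1,d],[0,-1]]`, as a unit of `M₂(ℤ)`
(its inverse is `[[-1,-d],[0,-1]]`). -/
noncomputable def hUnit (d : ℤ) : (Matrix (Fin 2) (Fin 2) ℤ)ˣ where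
  val := !![-1, d; 0, -1]
  inv := !![-1, -d; 0, -1]
  val_inv := by
    ext i j
    fin_cases i <;> fin_cases j <;>
      simp [Matrix.mul_apply, Fin.sum_univ_succ, Matrix.one_apply]
  inv_val := by
    ext i j
    fin_cases i <;> fin_cases j <;>
      simp [Matrix.mul_apply, Fin.sum_univ_succ, Matrix.one_apply]

/-- The `ℤ[t,t⁻¹]`-module structure on `ℤ²` in which `t` acts by `h`, packaged as the
ring homomorphism `ℤ[t,t⁻¹] → M₂(ℤ)` sending `t` to `h`. -/
noncomputable def laurentToMatrix (d : ℤ) :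
    LaurentPolynomial ℤ →ₐ[ℤ] Matrix (Fin 2) (Fin 2) ℤ :=
  AddMonoidAlgebra.lift ℤ _ ℤ
    ((Units.coeHom (Matrix (Fin 2) (Fin 2) ℤ)).comp
      (zpowersHom (Matrix (Fin 2) (Fin 2) ℤ)ˣ (hUnit d)))

/-- The augmentation map `ℤ[t,t⁻¹] → ℤ`, `t ↦ 1`; its kernel is the augmentation
ideal `I` (the ideal generated by `t - 1`). -/
noncomputable def laurentAug : LaurentPolynomial ℤ →ₐ[ℤ] ℤ :=
  AddMonoidAlgebra.lift ℤ ℤ ℤ ((Units.coeHom ℤ).comp (zpowersHom ℤˣ 1))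

open LaurentPolynomial

lemma dvd_T_sub_one (n : ℤ) : (T 1 - 1 : ℤ[T;T⁻¹]) ∣ T n - 1 := by
  have hneg : (T 1 - 1 : ℤ[T;T⁻¹]) ∣ T (-1) - 1 := by
    refine ⟨-T (-1), ?_⟩
    rw [sub_mul, one_mul, mul_neg, ← T_add]
    ring_nf
    simp only [T_zero]
    ring
  induction n using Int.induction_on with
  | zero => simp [T_zero]
  | succ n ih =>
      have h : (T (n + 1) - 1 : ℤ[T;T⁻¹]) = T n * (T 1 - 1) + (T n - 1) := by
        rw [T_add]; ring
      rw [h]; exact dvd_add (Dvd.intro_left _ rfl) ih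
  | pred n ih =>
      have h : (T (-n - 1) - 1 : ℤ[T;T⁻¹]) = T (-n) * (T (-1) - 1) + (T (-n) - 1) := by
        rw [show (-n - 1 : ℤ) = -n + -1 by ring, T_add]; ring
      rw [h]; exact dvd_add (Dvd.dvd.mul_left hneg _) ih

lemma aug_C_mul_T (a : ℤ) (n : ℤ) : laurentAug (C a * T n) = a := by
  rw [map_mul]
  have h1 : laurentAug (T n) = 1 := by
    rw [laurentAug, LaurentPolynomial.T, AddMonoidAlgebra.lift_single]; simp
  have h2 : laurentAug (C a) = a := by
    rw [laurentAug, LaurentPolynomial.C]; simp [AddMonoidAlgebra.lift_single]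
  rw [h1, h2, mul_one]

lemma ker_le_span : RingHom.ker laurentAug.toRingHom ≤ Ideal.span {(T 1 - 1 : ℤ[T;T⁻¹])} := by
  intro p hp
  have key : ∀ q : ℤ[T;T⁻¹], q - C (laurentAug q) ∈ Ideal.span {(T 1 - 1 : ℤ[T;T⁻¹])} := by
    intro q
    induction q using LaurentPolynomial.induction_on' with
    | add f g hf hg =>
        have : f + g - C (laurentAug (f + g)) = (f - C (laurentAug f)) + (g - C (laurentAug g)) := by
          rw [map_add, map_add]; ring
        rw [this]; exact Ideal.add_mem _ hf hg
    | C_mul_T n a =>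
        rw [aug_C_mul_T]
        have : C a * T n - C a = C a * (T n - 1) := by ring
        rw [this]
        exact Ideal.mem_span_singleton.mpr ((dvd_T_sub_one n).mul_left _)
  have hp0 : laurentAug p = 0 := hp
  have := key p
  rwa [hp0, map_zero, sub_zero] at this

lemma toMatrix_T_one (d : ℤ) : laurentToMatrix d (T 1) = (hUnit d : Matrix (Fin 2) (Fin 2) ℤ) := by
  rw [laurentToMatrix, LaurentPolynomial.T, AddMonoidAlgebra.lift_single]
  simp

lemma h_sub_one_sq (d : ℤ) :
    ((hUnit d : Matrix (Fin 2) (Fin 2) ℤ) - 1) ^ 2 = (-4 : ℤ) • (hUnit d : Matrix (Fin 2) (Fin 2) ℤ) := by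
  show ((!![-1, d; 0, -1] : Matrix (Fin 2) (Fin 2) ℤ) - 1) ^ 2 = (-4 : ℤ) • !![-1, d; 0, -1]
  rw [pow_two]
  ext i j
  fin_cases i <;> fin_cases j <;>
    simp [Matrix.mul_apply, Fin.sum_univ_succ, Matrix.one_apply] <;> ring
/-- For `d` odd and `M = ℤ²` the `ℤ[t,t⁻¹]`-module on which `t` acts by
`h = [[-1,d],[0,-1]]`: every element of `I^(2k)·M` lies in `4^k·M`, and consequently
`⋂_k I^k·M = 0`. -/
theorem augmentation_ideal_powers_shrink (d : ℤ) (hd : Odd d) :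
    (∀ k : ℕ, ∀ p ∈ (RingHom.ker laurentAug.toRingHom) ^ (2 * k),
      ∀ m : Fin 2 → ℤ, ∃ m' : Fin 2 → ℤ,
        (laurentToMatrix d p).mulVec m = ((4 : ℤ) ^ k) • m') ∧
    (∀ m : Fin 2 → ℤ,
      (∀ k : ℕ, m ∈ AddSubgroup.closure
        {v : Fin 2 → ℤ | ∃ p ∈ (RingHom.ker laurentAug.toRingHom) ^ k,
          ∃ w : Fin 2 → ℤ, v = (laurentToMatrix d p).mulVec w}) → m = 0) := by
  set h : Matrix (Fin 2) (Fin 2) ℤ := (hUnit d : Matrix (Fin 2) (Fin 2) ℤ) with hh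
  have part1 : ∀ k : ℕ, ∀ p ∈ (RingHom.ker laurentAug.toRingHom) ^ (2 * k),
      ∀ m : Fin 2 → ℤ, ∃ m' : Fin 2 → ℤ,
        (laurentToMatrix d p).mulVec m = ((4 : ℤ) ^ k) • m' := by
    intro k p hp m
    have h1 : p ∈ Ideal.span {((LaurentPolynomial.T 1 - 1 : ℤ[T;T⁻¹])) ^ (2 * k)} := by
      rw [← Ideal.span_singleton_pow]
      exact Ideal.pow_right_mono ker_le_span (2 * k) hp
    obtain ⟨q, hq⟩ := Ideal.mem_span_singleton.mp h1
    have hAp : laurentToMatrix d p = ((h - 1) ^ 2) ^ k * laurentToMatrix d q := by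
      rw [hq, map_mul, map_pow, map_sub, map_one, toMatrix_T_one, ← hh, ← pow_mul]
    rw [hAp, h_sub_one_sq, ← hh, smul_pow]
    refine ⟨(-1 : ℤ) ^ k • (h ^ k * laurentToMatrix d q).mulVec m, ?_⟩
    rw [smul_mul_assoc, Matrix.smul_mulVec, smul_smul]
    rw [show ((4:ℤ)^k * (-1)^k) = (-4:ℤ)^k by rw [← mul_pow]; norm_num]
  refine ⟨part1, ?_⟩
  intro m hm
  have key : ∀ j : ℕ, ∃ y : Fin 2 → ℤ, m = ((4:ℤ) ^ j) • y := by
    intro j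
    have hmem := hm (2 * j)
    have hle : AddSubgroup.closure
        {v : Fin 2 → ℤ | ∃ p ∈ (RingHom.ker laurentAug.toRingHom) ^ (2 * j),
          ∃ w : Fin 2 → ℤ, v = (laurentToMatrix d p).mulVec w} ≤
        AddMonoidHom.range (DistribMulAction.toAddMonoidHom (Fin 2 → ℤ) ((4:ℤ) ^ j)) := by
      rw [AddSubgroup.closure_le]
      rintro v ⟨p, hp, w, rfl⟩
      obtain ⟨m', hm'⟩ := part1 j p hp w
      exact ⟨m', hm'.symm⟩
    obtain ⟨y, hy⟩ := hle hmem
    exact ⟨y, hy.symm⟩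
  funext i
  show m i = 0
  obtain ⟨y, hy⟩ := key (m i).natAbs
  have hdvd : ((4:ℤ) ^ (m i).natAbs) ∣ m i := by
    refine ⟨y i, ?_⟩
    conv_lhs => rw [hy]
    simp
  refine Int.eq_zero_of_abs_lt_dvd hdvd ?_
  calc |m i| = ((m i).natAbs : ℤ) := (Int.abs_eq_natAbs _)
    _ < (4:ℤ) ^ (m i).natAbs := by
      exact_mod_cast Nat.lt_pow_self (by norm_num : 1 < 4)
end
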